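/- Suppose F : ℍ × ℍ → ℍ is C¹ and left ℍ-regular separately in each variable q₁ and q₂ (i.e., D_{q₁}F = 0 and D_{q₂}F = 0). Then for any quaternionic constant α, the function f(q₁) := F(q₁, αq₁) is left ℍ-regular in q₁. -/

import Mathlib

open scoped Quaternion

noncomputable section

/-- The standard real basis `1, e₁, e₂, e₃` of the quaternions. -/
def qe : Fin 4 → ℍ[ℝ] := ![1, ⟨0, 1, 0, 0⟩, ⟨0, 0, 1, 0⟩, ⟨0, 0, 0, 1⟩]

/-- The Dirac (Cauchy–Riemann–Fueter) operator `D = Σᵢ eᵢ ∂/∂xᵢ` applied to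
`g : ℍ → ℍ` at the point `x`. -/
def quatDirac (g : ℍ[ℝ] → ℍ[ℝ]) (x : ℍ[ℝ]) : ℍ[ℝ] :=
  ∑ i : Fin 4, qe i * fderiv ℝ g x (qe i)

/-- A `C¹` function is left `ℍ`-regular on a set if its Fueter–Dirac derivative vanishes. -/
def LeftRegular (g : ℍ[ℝ] → ℍ[ℝ]) : Prop := ∀ x, quatDirac g x = 0

lemma qe0_mul (x : ℍ[ℝ]) : qe 0 * x = x := by
  have : qe 0 = 1 := by simp [qe]
  rw [this, one_mul]
lemma qe10 : qe 1 * qe 0 = qe 1 := by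
  ext <;> simp only [Quaternion.re_mul, Quaternion.imI_mul, Quaternion.imJ_mul, Quaternion.imK_mul, Quaternion.re_neg, Quaternion.imI_neg, Quaternion.imJ_neg, Quaternion.imK_neg] <;> simp [qe]
lemma qe11 : qe 1 * qe 1 = -qe 0 := by
  ext <;> simp only [Quaternion.re_mul, Quaternion.imI_mul, Quaternion.imJ_mul, Quaternion.imK_mul, Quaternion.re_neg, Quaternion.imI_neg, Quaternion.imJ_neg, Quaternion.imK_neg] <;> simp [qe]
lemma qe12 : qe 1 * qe 2 = qe 3 := by
  ext <;> simp only [Quaternion.re_mul, Quaternion.imI_mul, Quaternion.imJ_mul, Quaternion.imK_mul, Quaternion.re_neg, Quaternion.imI_neg, Quaternion.imJ_neg, Quaternion.imK_neg] <;> simp [qe]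
lemma qe13 : qe 1 * qe 3 = -qe 2 := by
  ext <;> simp only [Quaternion.re_mul, Quaternion.imI_mul, Quaternion.imJ_mul, Quaternion.imK_mul, Quaternion.re_neg, Quaternion.imI_neg, Quaternion.imJ_neg, Quaternion.imK_neg] <;> simp [qe]
lemma qe20 : qe 2 * qe 0 = qe 2 := by
  ext <;> simp only [Quaternion.re_mul, Quaternion.imI_mul, Quaternion.imJ_mul, Quaternion.imK_mul, Quaternion.re_neg, Quaternion.imI_neg, Quaternion.imJ_neg, Quaternion.imK_neg] <;> simp [qe]
lemma qe21 : qe 2 * qe 1 = -qe 3 := by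
  ext <;> simp only [Quaternion.re_mul, Quaternion.imI_mul, Quaternion.imJ_mul, Quaternion.imK_mul, Quaternion.re_neg, Quaternion.imI_neg, Quaternion.imJ_neg, Quaternion.imK_neg] <;> simp [qe]
lemma qe22 : qe 2 * qe 2 = -qe 0 := by
  ext <;> simp only [Quaternion.re_mul, Quaternion.imI_mul, Quaternion.imJ_mul, Quaternion.imK_mul, Quaternion.re_neg, Quaternion.imI_neg, Quaternion.imJ_neg, Quaternion.imK_neg] <;> simp [qe]
lemma qe23 : qe 2 * qe 3 = qe 1 := by
  ext <;> simp only [Quaternion.re_mul, Quaternion.imI_mul, Quaternion.imJ_mul, Quaternion.imK_mul, Quaternion.re_neg, Quaternion.imI_neg, Quaternion.imJ_neg, Quaternion.imK_neg] <;> simp [qe]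
lemma qe30 : qe 3 * qe 0 = qe 3 := by
  ext <;> simp only [Quaternion.re_mul, Quaternion.imI_mul, Quaternion.imJ_mul, Quaternion.imK_mul, Quaternion.re_neg, Quaternion.imI_neg, Quaternion.imJ_neg, Quaternion.imK_neg] <;> simp [qe]
lemma qe31 : qe 3 * qe 1 = qe 2 := by
  ext <;> simp only [Quaternion.re_mul, Quaternion.imI_mul, Quaternion.imJ_mul, Quaternion.imK_mul, Quaternion.re_neg, Quaternion.imI_neg, Quaternion.imJ_neg, Quaternion.imK_neg] <;> simp [qe]
lemma qe32 : qe 3 * qe 2 = -qe 1 := by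
  ext <;> simp only [Quaternion.re_mul, Quaternion.imI_mul, Quaternion.imJ_mul, Quaternion.imK_mul, Quaternion.re_neg, Quaternion.imI_neg, Quaternion.imJ_neg, Quaternion.imK_neg] <;> simp [qe]
lemma qe33 : qe 3 * qe 3 = -qe 0 := by
  ext <;> simp only [Quaternion.re_mul, Quaternion.imI_mul, Quaternion.imJ_mul, Quaternion.imK_mul, Quaternion.re_neg, Quaternion.imI_neg, Quaternion.imJ_neg, Quaternion.imK_neg] <;> simp [qe]

lemma star_decomp (q : ℍ[ℝ]) :
    star q = q.re • qe 0 - q.imI • qe 1 - q.imJ • qe 2 - q.imK • qe 3 := by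
  ext <;> simp only [Quaternion.re_smul, Quaternion.imI_smul, Quaternion.imJ_smul, Quaternion.imK_smul, Quaternion.re_sub, Quaternion.imI_sub, Quaternion.imJ_sub, Quaternion.imK_sub] <;> simp [qe]

lemma quat_decomp (q : ℍ[ℝ]) :
    q = q.re • qe 0 + q.imI • qe 1 + q.imJ • qe 2 + q.imK • qe 3 := by
  ext <;> simp only [Quaternion.re_smul, Quaternion.imI_smul, Quaternion.imJ_smul, Quaternion.imK_smul, Quaternion.re_add, Quaternion.imI_add, Quaternion.imJ_add, Quaternion.imK_add] <;> simp [qe]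

set_option maxHeartbeats 2000000 in
/-- The key algebraic identity: for any `ℝ`-linear `L : ℍ → ℍ`,
`∑ i, eᵢ * L (q * eᵢ) = star q * ∑ i, eᵢ * L eᵢ`. -/
lemma key (L : ℍ[ℝ] →ₗ[ℝ] ℍ[ℝ]) (q : ℍ[ℝ]) :
    ∑ i : Fin 4, qe i * L (q * qe i) = star q * ∑ i : Fin 4, qe i * L (qe i) := by
  rw [star_decomp q]
  conv_lhs => rw [quat_decomp q]
  simp only [Fin.sum_univ_four, add_mul, sub_mul, smul_mul_assoc, ← mul_assoc,
    qe0_mul, qe10, qe11, qe12, qe13, qe20, qe21, qe22, qe23,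
    qe30, qe31, qe32, qe33, map_add, map_smul, map_neg, smul_neg, mul_add, mul_neg,
    mul_smul_comm, neg_smul, neg_mul]
  module

/-- Proposition 4.5: if `F(q₁,q₂)` is `C¹` and left `ℍ`-regular separately in each of the
two quaternionic variables, then for any quaternionic constant `α` the function
`q₁ ↦ F(q₁, α q₁)` is left `ℍ`-regular. -/
theorem regular_along_quaternionic_line
    (F : ℍ[ℝ] × ℍ[ℝ] → ℍ[ℝ]) (hF : ContDiff ℝ 1 F)
    (h1 : ∀ q2 : ℍ[ℝ], LeftRegular fun q1 => F (q1, q2))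
    (h2 : ∀ q1 : ℍ[ℝ], LeftRegular fun q2 => F (q1, q2)) (α : ℍ[ℝ]) :
    LeftRegular fun q1 => F (q1, α * q1) := by
  intro x
  have hDF : DifferentiableAt ℝ F (x, α * x) := hF.differentiable one_ne_zero _
  set D := fderiv ℝ F (x, α * x) with hD
  have hg : HasFDerivAt (fun q : ℍ[ℝ] => (q, α * q))
      ((ContinuousLinearMap.id ℝ ℍ[ℝ]).prod (ContinuousLinearMap.mul ℝ ℍ[ℝ] α)) x :=
    HasFDerivAt.prodMk (hasFDerivAt_id x) ((hasFDerivAt_id x).const_mul α)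
  have hf : HasFDerivAt (fun q1 => F (q1, α * q1))
      (D.comp ((ContinuousLinearMap.id ℝ ℍ[ℝ]).prod (ContinuousLinearMap.mul ℝ ℍ[ℝ] α))) x :=
    (hDF.hasFDerivAt).comp x hg
  have hf' : fderiv ℝ (fun q1 => F (q1, α * q1)) x
      = D.comp ((ContinuousLinearMap.id ℝ ℍ[ℝ]).prod (ContinuousLinearMap.mul ℝ ℍ[ℝ] α)) :=
    hf.fderiv
  have hp1 : ∀ v, fderiv ℝ (fun q1 => F (q1, α * x)) x v = D (v, 0) := by
    intro v
    have h : HasFDerivAt (fun q1 => F (q1, α * x))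
        (D.comp ((ContinuousLinearMap.id ℝ ℍ[ℝ]).prod 0)) x :=
      hDF.hasFDerivAt.comp x (HasFDerivAt.prodMk (hasFDerivAt_id x) (hasFDerivAt_const (α * x) x))
    rw [h.fderiv]; simp
  have hp2 : ∀ w, fderiv ℝ (fun q2 => F (x, q2)) (α * x) w = D (0, w) := by
    intro w
    have h : HasFDerivAt (fun q2 => F (x, q2))
        (D.comp ((0 : ℍ[ℝ] →L[ℝ] ℍ[ℝ]).prod (ContinuousLinearMap.id ℝ ℍ[ℝ]))) (α * x) :=
      hDF.hasFDerivAt.comp (α * x) (HasFDerivAt.prodMk (hasFDerivAt_const x (α * x)) (hasFDerivAt_id (α * x)))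
    rw [h.fderiv]; simp
  have e1 : ∑ i : Fin 4, qe i * D (qe i, 0) = 0 := by
    have := h1 (α * x) x
    unfold quatDirac at this
    simpa only [hp1] using this
  have e2 : ∑ i : Fin 4, qe i * D (0, qe i) = 0 := by
    have := h2 x (α * x)
    unfold quatDirac at this
    simpa only [hp2] using this
  -- the linear map `w ↦ D (0, w)`
  set L : ℍ[ℝ] →ₗ[ℝ] ℍ[ℝ] :=
    (D.comp ((0 : ℍ[ℝ] →L[ℝ] ℍ[ℝ]).prod (ContinuousLinearMap.id ℝ ℍ[ℝ]))).toLinearMap with hL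
  have hLw : ∀ w, L w = D (0, w) := by intro w; simp [hL]
  have e2' : ∑ i : Fin 4, qe i * D (0, α * qe i) = 0 := by
    calc ∑ i : Fin 4, qe i * D (0, α * qe i)
        = ∑ i : Fin 4, qe i * L (α * qe i) := by simp only [hLw]
      _ = star α * ∑ i : Fin 4, qe i * L (qe i) := key L α
      _ = star α * ∑ i : Fin 4, qe i * D (0, qe i) := by simp only [hLw]
      _ = 0 := by rw [e2, mul_zero]
  unfold quatDirac
  rw [hf']
  have split : ∀ i : Fin 4,
      (D.comp ((ContinuousLinearMap.id ℝ ℍ[ℝ]).prod (ContinuousLinearMap.mul ℝ ℍ[ℝ] α))) (qe i)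
        = D (qe i, 0) + D (0, α * qe i) := by
    intro i
    have : ((qe i : ℍ[ℝ]), α * qe i) = (qe i, (0 : ℍ[ℝ])) + ((0 : ℍ[ℝ]), α * qe i) := by
      simp [Prod.ext_iff]
    simp only [ContinuousLinearMap.comp_apply, ContinuousLinearMap.prod_apply,
      ContinuousLinearMap.id_apply, ContinuousLinearMap.mul_apply', this, map_add]
  calc ∑ i : Fin 4, qe i *
        (D.comp ((ContinuousLinearMap.id ℝ ℍ[ℝ]).prod (ContinuousLinearMap.mul ℝ ℍ[ℝ] α))) (qe i)
      = ∑ i : Fin 4, (qe i * D (qe i, 0) + qe i * D (0, α * qe i)) := by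
        refine Finset.sum_congr rfl fun i _ => ?_
        rw [split i, mul_add]
    _ = (∑ i : Fin 4, qe i * D (qe i, 0)) + ∑ i : Fin 4, qe i * D (0, α * qe i) :=
        Finset.sum_add_distrib
    _ = 0 := by rw [e1, e2', add_zero]

end
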